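/- Let n ≥ 1 and let β₁, β₂, β₃, β₄ be permutations of {1,…,2n} with β₁ connected. Then the chain functional F(β) := |β₁| + 2|γ_{n,n}⁻¹β₂| + |β₃| + |γ_{n,n}⁻¹β₃| + |β₄| + |β₁⁻¹β₂| + |β₂⁻¹β₃| + |β₃⁻¹β₄| satisfies F(β) ≥ 3(2n − 2) + 2. -/

import Mathlib

/-!
For a permutation `σ` of a finite set of size `m`, `cycleCount σ` is the number of cycles
(fixed points count as cycles) and `permLen σ = m - cycleCount σ` (the minimal number of
transpositions needed to write `σ`).  We model `{1,…,2n}` as `Fin n ⊕ Fin n`, the first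
summand being `{1,…,n}` and the second `{n+1,…,2n}`.  `gammaNN n` is the product of the
two `n`-cycles `(1,2,…,n)` and `(n+1,…,2n)`.
-/

/-- The number of cycles of a permutation, where fixed points count as cycles. -/
noncomputable def cycleCount {α : Type*} [Fintype α] [DecidableEq α]
    (σ : Equiv.Perm α) : ℕ :=
  Multiset.card σ.cycleType + (Fintype.card α - σ.support.card)

/-- `|σ| = m - #(σ)`, the minimal number of transpositions whose product is `σ`. -/
noncomputable def permLen {α : Type*} [Fintype α] [DecidableEq α]
    (σ : Equiv.Perm α) : ℕ :=
  Fintype.card α - cycleCount σ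

/-- `γ_{n,n}`: the product of the two `n`-cycles `(1,…,n)` and `(n+1,…,2n)`. -/
def gammaNN (n : ℕ) : Equiv.Perm (Fin n ⊕ Fin n) :=
  Equiv.sumCongr (finRotate n) (finRotate n)

/-- A permutation of `{1,…,2n}` is connected if some cycle of it contains both an
element of `{1,…,n}` and an element of `{n+1,…,2n}`. -/
def IsConnectedPerm {n : ℕ} (β : Equiv.Perm (Fin n ⊕ Fin n)) : Prop :=
  ∃ a b : Fin n, β.SameCycle (Sum.inl a) (Sum.inr b)

/-- The chain functional
`F(β) = |β₁| + 2|γ_{n,n}⁻¹β₂| + |β₃| + |γ_{n,n}⁻¹β₃| + |β₄| + |β₁⁻¹β₂| + |β₂⁻¹β₃| + |β₃⁻¹β₄|`. -/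
noncomputable def chainF {n : ℕ} (b₁ b₂ b₃ b₄ : Equiv.Perm (Fin n ⊕ Fin n)) : ℕ :=
  permLen b₁ + 2 * permLen ((gammaNN n)⁻¹ * b₂) + permLen b₃
    + permLen ((gammaNN n)⁻¹ * b₃) + permLen b₄
    + permLen (b₁⁻¹ * b₂) + permLen (b₂⁻¹ * b₃) + permLen (b₃⁻¹ * b₄)

/-! ### Auxiliary setoid lemmas -/

section SetoidLemmas

variable {β : Type*}

/-- The setoid identifying `x` and `y` (and nothing else). -/
def pairS (x y : β) : Setoid β :=
  Relation.EqvGen.setoid (fun a b => a = x ∧ b = y)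

lemma pairS_rel (x y : β) : pairS x y x y := Relation.EqvGen.rel x y ⟨rfl, rfl⟩

/-- The setoid obtained from `s` by merging the classes of `x` and `y`. -/
def mergeS (s : Setoid β) (x y : β) : Setoid β :=
  ⟨fun a b => s a b ∨ (s a x ∧ s y b) ∨ (s a y ∧ s x b),
   ⟨fun a => Or.inl (s.refl' a),
    by
      rintro a b (h | ⟨h1, h2⟩ | ⟨h1, h2⟩)
      · exact Or.inl (s.symm' h)
      · exact Or.inr (Or.inr ⟨s.symm' h2, s.symm' h1⟩)
      · exact Or.inr (Or.inl ⟨s.symm' h2, s.symm' h1⟩),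
    by
      rintro a b c (h | ⟨h1, h2⟩ | ⟨h1, h2⟩) (h' | ⟨h1', h2'⟩ | ⟨h1', h2'⟩)
      · exact Or.inl (s.trans' h h')
      · exact Or.inr (Or.inl ⟨s.trans' h h1', h2'⟩)
      · exact Or.inr (Or.inr ⟨s.trans' h h1', h2'⟩)
      · exact Or.inr (Or.inl ⟨h1, s.trans' h2 h'⟩)
      · exact Or.inr (Or.inl ⟨h1, h2'⟩)
      · exact Or.inl (s.trans' h1 h2')
      · exact Or.inr (Or.inr ⟨h1, s.trans' h2 h'⟩)
      · exact Or.inl (s.trans' h1 h2')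
      · exact Or.inr (Or.inr ⟨h1, h2'⟩)⟩⟩

lemma sup_pairS_le (s : Setoid β) (x y : β) : s ⊔ pairS x y ≤ mergeS s x y := by
  refine sup_le (fun a b h => Or.inl h) (Setoid.eqvGen_le ?_)
  rintro a b ⟨rfl, rfl⟩
  exact Or.inr (Or.inl ⟨s.refl' a, s.refl' b⟩)

lemma setoid_le_apply {r s : Setoid β} (h : r ≤ s) {a b : β} (hab : r a b) : s a b :=
  Setoid.le_def.mp h hab

/-- The natural map between quotients for comparable setoids. -/
def quotMap {r s : Setoid β} (h : r ≤ s) : Quotient r → Quotient s :=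
  Quotient.map' id fun _ _ hab => h hab

lemma quotMap_mk {r s : Setoid β} (h : r ≤ s) (a : β) :
    quotMap h (Quotient.mk r a) = Quotient.mk s a := rfl

lemma quotMap_surjective {r s : Setoid β} (h : r ≤ s) : Function.Surjective (quotMap h) := by
  intro q
  induction q using Quotient.inductionOn with
  | h a => exact ⟨Quotient.mk r a, rfl⟩

lemma card_quot_le_of_le [Finite β] {r s : Setoid β} (h : r ≤ s) :
    Nat.card (Quotient s) ≤ Nat.card (Quotient r) :=
  Nat.card_le_card_of_surjective _ (quotMap_surjective h)

lemma card_add_one_le_of_surj {A B : Type*} [Finite A] {f : A → B} (hf : Function.Surjective f)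
    {a₁ a₂ : A} (hne : a₁ ≠ a₂) (heq : f a₁ = f a₂) : Nat.card B + 1 ≤ Nat.card A := by
  classical
  have : Finite B := Finite.of_surjective f hf
  have hfs : ∀ b, f (Function.surjInv hf b) = b := Function.surjInv_eq hf
  have key : ∀ b, f (if Function.surjInv hf b = a₁ then a₂ else Function.surjInv hf b) = b := by
    intro b
    split
    · rename_i h'; rw [← heq, ← h', hfs]
    · rw [hfs]
  let g : Option B → A := fun z =>
    match z with
    | some b => if Function.surjInv hf b = a₁ then a₂ else Function.surjInv hf b
    | none => a₁
  have hgne : ∀ b, g (some b) ≠ a₁ := by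
    intro b
    simp only [g]
    split
    · exact Ne.symm hne
    · assumption
  have hg : Function.Injective g := by
    rintro (_ | b) (_ | b') h
    · rfl
    · exact absurd h.symm (hgne b')
    · exact absurd h (hgne b)
    · have : b = b' := by rw [← key b, ← key b']; exact congrArg f h
      rw [this]
  have := Nat.card_le_card_of_injective g hg
  simpa [Finite.card_option] using this

lemma card_quot_le_sup_pair [Finite β] (s : Setoid β) (x y : β) :
    Nat.card (Quotient s) ≤ Nat.card (Quotient (s ⊔ pairS x y)) + 1 := by
  classical
  have := Fintype.ofFinite (Quotient (s ⊔ pairS x y))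
  let f : Quotient s → Option (Quotient (s ⊔ pairS x y)) := fun c =>
    if c = Quotient.mk s x then none else some (quotMap le_sup_left c)
  have hinj : Function.Injective f := by
    intro c₁ c₂ h
    induction c₁ using Quotient.inductionOn with
    | h a =>
    induction c₂ using Quotient.inductionOn with
    | h b =>
    by_cases h₁ : Quotient.mk s a = Quotient.mk s x <;>
      by_cases h₂ : Quotient.mk s b = Quotient.mk s x
    · rw [h₁, h₂]
    · simp only [f, if_pos h₁, if_neg h₂] at h; exact absurd h.symm (by simp)
    · simp only [f, if_neg h₁, if_pos h₂] at h; exact absurd h (by simp)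
    · simp only [f, if_neg h₁, if_neg h₂, Option.some.injEq] at h
      rw [quotMap_mk, quotMap_mk] at h
      have hab : (s ⊔ pairS x y) a b := Quotient.eq''.mp h
      rcases sup_pairS_le s x y hab with h' | ⟨h1, _⟩ | ⟨_, h2⟩
      · exact Quotient.sound h'
      · exact absurd (Quotient.sound h1) h₁
      · exact absurd (Quotient.sound (s.symm' h2)) h₂
  have := Nat.card_le_card_of_injective f hinj
  simpa [Finite.card_option] using this

end SetoidLemmas

/-! ### Cycle counting via quotients -/

section Perm

open Equiv Equiv.Perm

lemma sameCycle_le_setoid {β : Type*} [Finite β] (π : Equiv.Perm β) (s : Setoid β)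
    (h : ∀ z, s z (π z)) : ∀ {a b : β}, π.SameCycle a b → s a b := by
  have hpow : ∀ (k : ℕ) (z : β), s z ((π ^ k) z) := by
    intro k
    induction k with
    | zero => intro z; simpa using s.refl' z
    | succ k ih =>
        intro z
        have h1 := s.trans' (ih z) (h ((π ^ k) z))
        have h2 : (π ^ (k + 1)) z = π ((π ^ k) z) := by
          rw [pow_succ']; rfl
        rw [h2]; exact h1
  intro a b hab
  obtain ⟨i, _, hieq⟩ := hab.exists_pow_eq'
  rw [← hieq]; exact hpow i a

variable {α : Type*} [Fintype α] [DecidableEq α]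

lemma sameCycle_fixed {σ : Equiv.Perm α} {a b : α} (hab : σ.SameCycle a b)
    (ha : σ a = a) : b = a := by
  obtain ⟨i, hi⟩ := hab
  rw [← hi, zpow_apply_eq_self_of_apply_eq_self ha]

lemma cycleCount_eq_card_quot (σ : Equiv.Perm α) :
    cycleCount σ = Nat.card (Quotient (Equiv.Perm.SameCycle.setoid σ)) := by
  classical
  rw [cycleCount]
  set s := Equiv.Perm.SameCycle.setoid σ with hs
  set T := (↥σ.cycleFactorsFinset ⊕ {x : α // σ x = x}) with hT
  set φ : α → T := fun x =>
    if h : σ x = x then Sum.inr ⟨x, h⟩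
    else Sum.inl ⟨σ.cycleOf x, cycleOf_mem_cycleFactorsFinset_iff.2 (mem_support.2 h)⟩
    with hφ
  have hwd : ∀ (a b : α), σ.SameCycle a b → φ a = φ b := by
    intro a b hab
    by_cases ha : σ a = a
    · have hba : b = a := sameCycle_fixed hab ha
      subst hba; rfl
    · have hb : ¬ σ b = b := by
        intro hbb
        exact ha (by rw [sameCycle_fixed hab.symm hbb]; exact hbb)
      show φ a = φ b
      rw [hφ]
      simp only [dif_neg ha, dif_neg hb]
      exact congrArg Sum.inl (Subtype.ext hab.cycleOf_eq)
  set Φ : Quotient s → T := Quotient.lift φ hwd with hΦ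
  have hinj : Function.Injective Φ := by
    intro c₁ c₂ h
    induction c₁ using Quotient.inductionOn with
    | h a =>
    induction c₂ using Quotient.inductionOn with
    | h b =>
    apply Quotient.sound
    show σ.SameCycle a b
    have h' : φ a = φ b := h
    rw [hφ] at h'
    simp only [] at h'
    by_cases ha : σ a = a <;> by_cases hb : σ b = b
    · rw [dif_pos ha, dif_pos hb] at h'
      have hab2 : a = b := congrArg Subtype.val (Sum.inr_injective h')
      rw [hab2]
    · rw [dif_pos ha, dif_neg hb] at h'
      exact absurd h' (by simp)
    · rw [dif_neg ha, dif_pos hb] at h'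
      exact absurd h' (by simp)
    · rw [dif_neg ha, dif_neg hb] at h'
      have h'' : σ.cycleOf a = σ.cycleOf b := congrArg Subtype.val (Sum.inl_injective h')
      have hmem : b ∈ (σ.cycleOf b).support :=
        mem_support_cycleOf_iff.2 ⟨Equiv.Perm.SameCycle.refl _ _, mem_support.2 hb⟩
      rw [← h''] at hmem
      exact (mem_support_cycleOf_iff.1 hmem).1
  have hsurj : Function.Surjective Φ := by
    rintro (⟨c, hc⟩ | ⟨x, hx⟩)
    · obtain ⟨a, ha⟩ := ((mem_cycleFactorsFinset_iff.1 hc).1).nonempty_support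
      have hca : c = σ.cycleOf a := cycle_is_cycleOf ha hc
      have hsa : ¬ σ a = a := by
        have h1 : c a ≠ a := mem_support.1 ha
        have h2 : c a = σ a := (mem_cycleFactorsFinset_iff.1 hc).2 a ha
        rw [h2] at h1; exact h1
      refine ⟨Quotient.mk s a, ?_⟩
      show φ a = _
      rw [hφ]
      simp only [dif_neg hsa]
      exact congrArg Sum.inl (Subtype.ext hca.symm)
    · exact ⟨Quotient.mk s x, by show φ x = _; rw [hφ]; simp only [dif_pos hx]⟩
  have hcard : Nat.card (Quotient s) = Nat.card T :=
    Nat.card_eq_of_bijective Φ ⟨hinj, hsurj⟩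
  have hct : Multiset.card σ.cycleType = σ.cycleFactorsFinset.card := by
    rw [cycleType_def, Multiset.card_map]; rfl
  have hfix : Fintype.card {x : α // σ x = x} = Fintype.card α - σ.support.card := by
    have hsupp : σ.support = Finset.univ.filter (fun x => ¬ σ x = x) := by
      ext z; simp [Equiv.Perm.mem_support]
    have h1 : (Finset.univ.filter (fun x => σ x = x)).card
        + (Finset.univ.filter (fun x => ¬ σ x = x)).card = Fintype.card α := by
      rw [Finset.card_filter_add_card_filter_not, Finset.card_univ]
    rw [Fintype.card_subtype, hsupp]
    omega
  rw [hcard, hT, Nat.card_eq_fintype_card, Fintype.card_sum, Fintype.card_coe, hct, hfix]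

/-! ### Basic facts about `cycleCount` and `permLen` -/

lemma two_mul_cycleType_card_le (σ : Equiv.Perm α) :
    2 * Multiset.card σ.cycleType ≤ σ.support.card := by
  have h := Multiset.card_nsmul_le_sum (s := σ.cycleType) (a := 2)
    (fun x hx => two_le_of_mem_cycleType hx)
  rw [sum_cycleType] at h
  simpa [smul_eq_mul, mul_comm] using h

lemma support_card_le (σ : Equiv.Perm α) : σ.support.card ≤ Fintype.card α := by
  simpa using Finset.card_le_univ σ.support

lemma cycleCount_le (σ : Equiv.Perm α) : cycleCount σ ≤ Fintype.card α := by
  have h1 := two_mul_cycleType_card_le σ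
  have h2 := support_card_le σ
  rw [cycleCount]
  omega

lemma permLen_add_cycleCount (σ : Equiv.Perm α) :
    permLen σ + cycleCount σ = Fintype.card α := by
  have := cycleCount_le σ
  rw [permLen]
  omega

lemma permLen_inv (σ : Equiv.Perm α) : permLen σ⁻¹ = permLen σ := by
  rw [permLen, permLen, cycleCount, cycleCount, Equiv.Perm.cycleType_inv,
    Equiv.Perm.support_inv]

lemma eq_one_of_permLen_eq_zero {σ : Equiv.Perm α} (h : permLen σ = 0) : σ = 1 := by
  have h1 := two_mul_cycleType_card_le σ
  have h2 := support_card_le σ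
  rw [permLen, cycleCount] at h
  have : σ.support.card = 0 := by omega
  exact Equiv.Perm.card_support_eq_zero.1 this

/-! ### Swap lemmas -/

lemma le_setoid_of_swap_mul {σ : Equiv.Perm α} (x y : α) (J : Setoid α)
    (hJ1 : ∀ a b, (Equiv.swap x y * σ).SameCycle a b → J a b) (hpair : J x y) :
    ∀ a b, σ.SameCycle a b → J a b := by
  intro a b h
  refine sameCycle_le_setoid σ J ?_ h
  intro z
  have hz : σ z = Equiv.swap x y ((Equiv.swap x y * σ) z) := by
    simp [Equiv.Perm.mul_apply, Equiv.swap_apply_self]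
  rcases eq_or_ne ((Equiv.swap x y * σ) z) x with h1 | h1
  · rw [hz, h1, Equiv.swap_apply_left]
    exact J.trans' (hJ1 z x ⟨1, by rw [zpow_one]; exact h1⟩) hpair
  rcases eq_or_ne ((Equiv.swap x y * σ) z) y with h2 | h2
  · rw [hz, h2, Equiv.swap_apply_right]
    exact J.trans' (hJ1 z y ⟨1, by rw [zpow_one]; exact h2⟩) (J.symm' hpair)
  · rw [hz, Equiv.swap_apply_of_ne_of_ne h1 h2]
    exact hJ1 z ((Equiv.swap x y * σ) z) ⟨1, by rw [zpow_one]⟩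

lemma setoid_swap_mul_le {σ : Equiv.Perm α} {x : α} :
    ∀ a b, (Equiv.swap x (σ x) * σ).SameCycle a b → σ.SameCycle a b := by
  have := le_setoid_of_swap_mul (σ := Equiv.swap x (σ x) * σ) x (σ x)
    (Equiv.Perm.SameCycle.setoid σ) ?_ ?_
  · intro a b h
    exact this a b h
  · intro a b h
    rw [Equiv.swap_mul_self_mul] at h
    exact h
  · exact ⟨1, by rw [zpow_one]⟩

lemma cycleCount_swap_mul {σ : Equiv.Perm α} {x : α} (hx : σ x ≠ x) :
    cycleCount σ + 1 ≤ cycleCount (Equiv.swap x (σ x) * σ) := by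
  classical
  rw [cycleCount_eq_card_quot, cycleCount_eq_card_quot]
  set σ' := Equiv.swap x (σ x) * σ with hσ'
  have hle : Equiv.Perm.SameCycle.setoid σ' ≤ Equiv.Perm.SameCycle.setoid σ :=
    fun a b h => setoid_swap_mul_le a b h
  have hfix : σ' x = x := by
    rw [hσ', Equiv.Perm.mul_apply, Equiv.swap_apply_right]
  have hne : (Quotient.mk (Equiv.Perm.SameCycle.setoid σ') x)
      ≠ (Quotient.mk (Equiv.Perm.SameCycle.setoid σ') (σ x)) := by
    intro h
    have h2 : σ'.SameCycle x (σ x) := Quotient.eq''.mp h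
    exact hx (sameCycle_fixed h2 hfix)
  have heq : quotMap hle (Quotient.mk _ x) = quotMap hle (Quotient.mk _ (σ x)) := by
    rw [quotMap_mk, quotMap_mk]
    exact Quotient.sound ⟨1, by rw [zpow_one]⟩
  exact card_add_one_le_of_surj (quotMap_surjective hle) hne heq

lemma cycleCount_le_swap_mul (σ : Equiv.Perm α) (x y : α) :
    cycleCount (Equiv.swap x y * σ) ≤ cycleCount σ + 1 := by
  classical
  set σ' := Equiv.swap x y * σ with hσ'
  set J : Setoid α := Equiv.Perm.SameCycle.setoid σ' ⊔ pairS x y with hJ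
  have hle : Equiv.Perm.SameCycle.setoid σ ≤ J := by
    intro a b h
    refine le_setoid_of_swap_mul x y J ?_ ?_ a b h
    · intro a b h'
      exact setoid_le_apply le_sup_left h'
    · exact setoid_le_apply le_sup_right (pairS_rel x y)
  calc cycleCount σ' = Nat.card (Quotient (Equiv.Perm.SameCycle.setoid σ')) :=
        cycleCount_eq_card_quot σ'
    _ ≤ Nat.card (Quotient J) + 1 := card_quot_le_sup_pair _ x y
    _ ≤ Nat.card (Quotient (Equiv.Perm.SameCycle.setoid σ)) + 1 := by
        have := card_quot_le_of_le hle
        omega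
    _ = cycleCount σ + 1 := by rw [cycleCount_eq_card_quot]

/-! ### The triangle inequality for `permLen` -/

lemma permLen_mul_le (σ τ : Equiv.Perm α) :
    permLen (σ * τ) ≤ permLen σ + permLen τ := by
  classical
  have main : ∀ (k : ℕ) (σ τ : Equiv.Perm α), permLen σ ≤ k →
      permLen (σ * τ) ≤ permLen σ + permLen τ := by
    intro k
    induction k with
    | zero =>
        intro σ τ h
        have : σ = 1 := eq_one_of_permLen_eq_zero (Nat.le_zero.1 h)
        subst this
        simp
    | succ k ih =>
        intro σ τ h
        by_cases h1 : σ = 1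
        · subst h1; simp
        · have hx : ∃ x, σ x ≠ x := by
            by_contra hc
            push_neg at hc
            exact h1 (Equiv.ext hc)
          obtain ⟨x, hx⟩ := hx
          set σ' := Equiv.swap x (σ x) * σ with hσ'
          have hcc := cycleCount_swap_mul hx
          rw [← hσ'] at hcc
          have e1 := permLen_add_cycleCount σ
          have e2 := permLen_add_cycleCount σ'
          have e3 := cycleCount_le σ'
          have hlt : permLen σ' + 1 ≤ permLen σ := by omega
          have hrec := ih σ' τ (by omega)
          have hback : σ * τ = Equiv.swap x (σ x) * (σ' * τ) := by
            rw [hσ', ← mul_assoc, Equiv.swap_mul_self_mul]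
          have hstep : permLen (σ * τ) ≤ permLen (σ' * τ) + 1 := by
            have hc := cycleCount_le_swap_mul (σ * τ) x (σ x)
            have hc' : cycleCount (σ' * τ) ≤ cycleCount (σ * τ) + 1 := by
              rw [hσ', mul_assoc]
              exact hc
            have f1 := permLen_add_cycleCount (σ * τ)
            have f2 := permLen_add_cycleCount (σ' * τ)
            have f3 := cycleCount_le (σ * τ)
            omega
          omega
  exact main (permLen σ) σ τ le_rfl

/-! ### The master connectivity bound -/

lemma master_bound (σ τ : Equiv.Perm α) :
    cycleCount σ + cycleCount τ ≤ Fintype.card α +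
      Nat.card (Quotient (Equiv.Perm.SameCycle.setoid σ ⊔ Equiv.Perm.SameCycle.setoid τ)) := by
  classical
  have main : ∀ (k : ℕ) (σ τ : Equiv.Perm α), permLen σ ≤ k →
      cycleCount σ + cycleCount τ ≤ Fintype.card α +
        Nat.card (Quotient (Equiv.Perm.SameCycle.setoid σ ⊔ Equiv.Perm.SameCycle.setoid τ)) := by
    intro k
    have base : ∀ τ : Equiv.Perm α, cycleCount (1 : Equiv.Perm α) + cycleCount τ ≤
        Fintype.card α + Nat.card (Quotient (Equiv.Perm.SameCycle.setoid (1 : Equiv.Perm α) ⊔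
          Equiv.Perm.SameCycle.setoid τ)) := by
      intro τ
      have hone : cycleCount (1 : Equiv.Perm α) = Fintype.card α := by
        have := permLen_add_cycleCount (1 : Equiv.Perm α)
        have hz : permLen (1 : Equiv.Perm α) = 0 := by
          rw [permLen, cycleCount]
          simp [Equiv.Perm.cycleType_one, Equiv.Perm.support_one]
        omega
      rw [hone]
      have hle : (Equiv.Perm.SameCycle.setoid (1 : Equiv.Perm α) ⊔
          Equiv.Perm.SameCycle.setoid τ) ≤ Equiv.Perm.SameCycle.setoid τ := by
        refine sup_le ?_ le_rfl
        intro a b hab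
        have : a = b := Equiv.Perm.sameCycle_one.1 hab
        rw [this]
      have := card_quot_le_of_le hle
      rw [cycleCount_eq_card_quot τ]
      omega
    induction k with
    | zero =>
        intro σ τ h
        have : σ = 1 := eq_one_of_permLen_eq_zero (Nat.le_zero.1 h)
        subst this
        exact base τ
    | succ k ih =>
        intro σ τ h
        by_cases h1 : σ = 1
        · subst h1
          exact base τ
        · have hx : ∃ x, σ x ≠ x := by
            by_contra hc
            push_neg at hc
            exact h1 (Equiv.ext hc)
          obtain ⟨x, hx⟩ := hx
          set σ' := Equiv.swap x (σ x) * σ with hσ'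
          have hcc := cycleCount_swap_mul hx
          rw [← hσ'] at hcc
          have e1 := permLen_add_cycleCount σ
          have e2 := permLen_add_cycleCount σ'
          have e3 := cycleCount_le σ'
          have hrec := ih σ' τ (by omega)
          -- c' ≤ c + 1
          set J := Equiv.Perm.SameCycle.setoid σ ⊔ Equiv.Perm.SameCycle.setoid τ with hJdef
          set J' := Equiv.Perm.SameCycle.setoid σ' ⊔ Equiv.Perm.SameCycle.setoid τ with hJ'def
          have hle : J ≤ J' ⊔ pairS x (σ x) := by
            refine sup_le ?_ ?_
            · intro a b hab
              refine le_setoid_of_swap_mul x (σ x) (J' ⊔ pairS x (σ x)) ?_ ?_ a b hab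
              · intro a b h'
                exact setoid_le_apply le_sup_left (setoid_le_apply le_sup_left h')
              · exact setoid_le_apply le_sup_right (pairS_rel x (σ x))
            · intro a b hab
              exact setoid_le_apply le_sup_left
                (setoid_le_apply (le_sup_right (a := Equiv.Perm.SameCycle.setoid σ')) hab)
          have hc1 : Nat.card (Quotient J') ≤ Nat.card (Quotient (J' ⊔ pairS x (σ x))) + 1 :=
            card_quot_le_sup_pair J' x (σ x)
          have hc2 : Nat.card (Quotient (J' ⊔ pairS x (σ x))) ≤ Nat.card (Quotient J) :=
            card_quot_le_of_le hle
          omega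
  exact main (permLen σ) σ τ le_rfl

/-! ### Parity -/

lemma permLen_eq_support_sub (σ : Equiv.Perm α) :
    permLen σ = σ.support.card - Multiset.card σ.cycleType := by
  have h1 := two_mul_cycleType_card_le σ
  have h2 := support_card_le σ
  rw [permLen, cycleCount]
  omega

lemma sign_eq_neg_one_pow (σ : Equiv.Perm α) :
    Equiv.Perm.sign σ = (-1 : ℤˣ) ^ permLen σ := by
  rw [Equiv.Perm.sign_of_cycleType]
  have h1 := two_mul_cycleType_card_le σ
  have h2 : σ.cycleType.sum = σ.support.card := Equiv.Perm.sum_cycleType σ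
  have h3 := permLen_eq_support_sub σ
  have h4 : σ.cycleType.sum + Multiset.card σ.cycleType
      = permLen σ + 2 * Multiset.card σ.cycleType := by omega
  rw [h4, pow_add, pow_mul]
  norm_num

lemma even_permLen_add_permLen {σ τ ρ : Equiv.Perm α} (h : σ * τ = ρ)
    (hρ : Equiv.Perm.sign ρ = 1) : Even (permLen σ + permLen τ) := by
  have hs : (-1 : ℤˣ) ^ (permLen σ + permLen τ) = 1 := by
    rw [pow_add, ← sign_eq_neg_one_pow, ← sign_eq_neg_one_pow, ← Equiv.Perm.sign_mul, h, hρ]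
  by_contra hodd
  rw [Nat.not_even_iff_odd] at hodd
  rw [hodd.neg_one_pow] at hs
  exact absurd hs (by decide)

end Perm

/-! ### Facts about `gammaNN` -/

section Gamma

open Equiv Equiv.Perm
open Fin.NatCast Fin.CommRing

lemma finRotate_pow_apply {m : ℕ} (k : ℕ) (a : Fin (m + 1)) :
    ((finRotate (m + 1)) ^ k) a = a + (k : Fin (m + 1)) := by
  induction k with
  | zero => simp
  | succ k ih =>
      have h : (finRotate (m + 1)) ^ (k + 1) = finRotate (m + 1) * (finRotate (m + 1)) ^ k := by
        rw [pow_succ']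
      rw [h, Equiv.Perm.mul_apply, ih, finRotate_succ_apply]
      have : ((k + 1 : ℕ) : Fin (m + 1)) = (k : Fin (m + 1)) + 1 := by
        push_cast
        ring
      rw [this]
      ring

lemma finRotate_reach {n : ℕ} (hn : 1 ≤ n) (a a' : Fin n) :
    ∃ k : ℕ, ((finRotate n) ^ k) a = a' := by
  obtain ⟨m, rfl⟩ : ∃ m, n = m + 1 := ⟨n - 1, by omega⟩
  refine ⟨(a' - a).val, ?_⟩
  rw [finRotate_pow_apply, Fin.cast_val_eq_self]
  ring

lemma gammaNN_pow_inl {n : ℕ} (k : ℕ) (a : Fin n) :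
    ((gammaNN n) ^ k) (Sum.inl a) = Sum.inl (((finRotate n) ^ k) a) := by
  induction k with
  | zero => simp
  | succ k ih =>
      rw [pow_succ', pow_succ', Equiv.Perm.mul_apply, Equiv.Perm.mul_apply, ih]
      simp [gammaNN]

lemma gammaNN_pow_inr {n : ℕ} (k : ℕ) (a : Fin n) :
    ((gammaNN n) ^ k) (Sum.inr a) = Sum.inr (((finRotate n) ^ k) a) := by
  induction k with
  | zero => simp
  | succ k ih =>
      rw [pow_succ', pow_succ', Equiv.Perm.mul_apply, Equiv.Perm.mul_apply, ih]
      simp [gammaNN]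

lemma gammaNN_sameCycle_inl {n : ℕ} (hn : 1 ≤ n) (a a' : Fin n) :
    (gammaNN n).SameCycle (Sum.inl a) (Sum.inl a') := by
  obtain ⟨k, hk⟩ := finRotate_reach hn a a'
  exact ⟨k, by rw [zpow_natCast, gammaNN_pow_inl, hk]⟩

lemma gammaNN_sameCycle_inr {n : ℕ} (hn : 1 ≤ n) (a a' : Fin n) :
    (gammaNN n).SameCycle (Sum.inr a) (Sum.inr a') := by
  obtain ⟨k, hk⟩ := finRotate_reach hn a a'
  exact ⟨k, by rw [zpow_natCast, gammaNN_pow_inr, hk]⟩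

lemma gammaNN_sameSide {n : ℕ} {z w : Fin n ⊕ Fin n} (h : (gammaNN n).SameCycle z w) :
    z.isLeft = w.isLeft := by
  refine sameCycle_le_setoid (gammaNN n) (Setoid.ker Sum.isLeft) ?_ h
  intro u
  show Sum.isLeft u = Sum.isLeft (gammaNN n u)
  cases u <;> simp [gammaNN]

lemma cycleCount_gammaNN {n : ℕ} (hn : 1 ≤ n) : cycleCount (gammaNN n) = 2 := by
  rw [cycleCount_eq_card_quot]
  have hn0 : 0 < n := hn
  let x0 : Fin n := ⟨0, hn0⟩
  let e : Quotient (Equiv.Perm.SameCycle.setoid (gammaNN n)) ≃ Bool :=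
    { toFun := Quotient.lift (fun z => Sum.isLeft z) (fun _ _ h => gammaNN_sameSide h)
      invFun := fun b => if b then Quotient.mk _ (Sum.inl x0) else Quotient.mk _ (Sum.inr x0)
      left_inv := by
        intro q
        induction q using Quotient.inductionOn with
        | h z =>
          cases z with
          | inl a =>
              simp only [Quotient.lift_mk, Sum.isLeft_inl, if_true]
              exact Quotient.sound (gammaNN_sameCycle_inl hn x0 a)
          | inr a =>
              simp only [Quotient.lift_mk, Sum.isLeft_inr, Bool.false_eq_true, if_false]
              exact Quotient.sound (gammaNN_sameCycle_inr hn x0 a)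
      right_inv := by
        intro b
        cases b <;> rfl }
  rw [Nat.card_congr e, Nat.card_eq_fintype_card]
  rfl

lemma card_sum_fin (n : ℕ) : Fintype.card (Fin n ⊕ Fin n) = 2 * n := by
  rw [Fintype.card_sum, Fintype.card_fin]
  omega

lemma sign_gammaNN (n : ℕ) : Equiv.Perm.sign (gammaNN n) = 1 := by
  rw [gammaNN, Equiv.Perm.sign_sumCongr]
  exact Int.units_mul_self _

lemma permLen_gammaNN {n : ℕ} (hn : 1 ≤ n) : permLen (gammaNN n) = 2 * n - 2 := by
  have h1 := permLen_add_cycleCount (gammaNN n)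
  rw [cycleCount_gammaNN hn, card_sum_fin] at h1
  omega

/-! ### The key connectivity lower bound -/

lemma key_connected {n : ℕ} (hn : 1 ≤ n) (b : Equiv.Perm (Fin n ⊕ Fin n))
    (hconn : IsConnectedPerm b) :
    2 * n ≤ permLen b + permLen (b⁻¹ * gammaNN n) := by
  classical
  set γ := gammaNN n with hγ
  set τ := b⁻¹ * γ with hτ
  set J := Equiv.Perm.SameCycle.setoid b ⊔ Equiv.Perm.SameCycle.setoid τ with hJ
  have hγz : ∀ z, J z (γ z) := by
    intro z
    have h1 : J z (τ z) := setoid_le_apply le_sup_right ⟨1, by rw [zpow_one]⟩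
    have h2 : J (τ z) (b (τ z)) := setoid_le_apply le_sup_left ⟨1, by rw [zpow_one]⟩
    have h3 : b (τ z) = γ z := by
      rw [hτ, Equiv.Perm.mul_apply, Equiv.Perm.inv_def, Equiv.apply_symm_apply]
    rw [h3] at h2
    exact J.trans' h1 h2
  have hγpow : ∀ (k : ℕ) (z : Fin n ⊕ Fin n), J z ((γ ^ k) z) := by
    intro k
    induction k with
    | zero => intro z; simpa using J.refl' z
    | succ k ih =>
        intro z
        have h1 := J.trans' (ih z) (hγz ((γ ^ k) z))
        have h2 : (γ ^ (k + 1)) z = γ ((γ ^ k) z) := by rw [pow_succ']; rfl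
        rw [h2]; exact h1
  obtain ⟨a₀, b₀, hab⟩ := hconn
  have hJab : J (Sum.inl a₀) (Sum.inr b₀) := setoid_le_apply le_sup_left hab
  have hto : ∀ z, J z (Sum.inr b₀) := by
    intro z
    cases z with
    | inl a =>
        obtain ⟨k, hk⟩ := finRotate_reach hn a a₀
        have h1 := hγpow k (Sum.inl a)
        rw [show (γ ^ k) (Sum.inl a) = Sum.inl a₀ by rw [hγ, gammaNN_pow_inl, hk]] at h1
        exact J.trans' h1 hJab
    | inr c =>
        obtain ⟨k, hk⟩ := finRotate_reach hn c b₀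
        have h1 := hγpow k (Sum.inr c)
        rw [show (γ ^ k) (Sum.inr c) = Sum.inr b₀ by rw [hγ, gammaNN_pow_inr, hk]] at h1
        exact h1
  have hall : ∀ z w, J z w := fun z w => J.trans' (hto z) (J.symm' (hto w))
  have hsub : Nat.card (Quotient J) ≤ 1 := by
    have hss : Subsingleton (Quotient J) :=
      ⟨fun c d => Quotient.inductionOn₂ c d fun z w => Quotient.sound (hall z w)⟩
    exact Finite.card_le_one_iff_subsingleton.2 hss
  have hmaster := master_bound b τ
  rw [← hJ] at hmaster
  have hpar : Even (permLen b + permLen τ) := by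
    refine even_permLen_add_permLen (ρ := γ) ?_ ?_
    · rw [hτ]
      exact mul_inv_cancel_left b γ
    · rw [hγ]
      exact sign_gammaNN n
  have e1 := permLen_add_cycleCount b
  have e2 := permLen_add_cycleCount τ
  have ecard := card_sum_fin n
  obtain ⟨c, hc⟩ := hpar
  omega

end Gamma

theorem chainF_connected_ge (n : ℕ) (hn : 1 ≤ n)
    (b₁ b₂ b₃ b₄ : Equiv.Perm (Fin n ⊕ Fin n)) (hconn : IsConnectedPerm b₁) :
    3 * (2 * n - 2) + 2 ≤ chainF b₁ b₂ b₃ b₄ := by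
  classical
  have hγlen : permLen (gammaNN n) = 2 * n - 2 := permLen_gammaNN hn
  have hγinvlen : permLen (gammaNN n)⁻¹ = 2 * n - 2 := by rw [permLen_inv]; exact hγlen
  have g1 : 2 * n - 2 ≤ permLen b₃ + permLen ((gammaNN n)⁻¹ * b₃) := by
    have h := permLen_mul_le b₃ (b₃⁻¹ * gammaNN n)
    rw [show b₃ * (b₃⁻¹ * gammaNN n) = gammaNN n from mul_inv_cancel_left _ _] at h
    have h2 : permLen (b₃⁻¹ * gammaNN n) = permLen ((gammaNN n)⁻¹ * b₃) := by
      rw [← permLen_inv (b₃⁻¹ * gammaNN n), mul_inv_rev, inv_inv]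
    omega
  have g2 : 2 * n - 2 ≤ permLen ((gammaNN n)⁻¹ * b₂) + permLen (b₂⁻¹ * b₃)
      + permLen (b₃⁻¹ * b₄) + permLen b₄ := by
    have h1 := permLen_mul_le ((gammaNN n)⁻¹ * b₂) (b₂⁻¹ * b₃)
    have h2 := permLen_mul_le ((gammaNN n)⁻¹ * b₂ * (b₂⁻¹ * b₃)) (b₃⁻¹ * b₄)
    have h3 := permLen_mul_le ((gammaNN n)⁻¹ * b₂ * (b₂⁻¹ * b₃) * (b₃⁻¹ * b₄)) b₄⁻¹
    have hid : (gammaNN n)⁻¹ * b₂ * (b₂⁻¹ * b₃) * (b₃⁻¹ * b₄) * b₄⁻¹ = (gammaNN n)⁻¹ := by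
      group
    rw [hid] at h3
    have h4 : permLen b₄⁻¹ = permLen b₄ := permLen_inv _
    omega
  have g3 : 2 * n ≤ permLen b₁ + permLen (b₁⁻¹ * b₂) + permLen ((gammaNN n)⁻¹ * b₂) := by
    have hkey := key_connected hn b₁ hconn
    have h1 := permLen_mul_le (b₁⁻¹ * b₂) (b₂⁻¹ * gammaNN n)
    have hid : (b₁⁻¹ * b₂) * (b₂⁻¹ * gammaNN n) = b₁⁻¹ * gammaNN n := by group
    rw [hid] at h1
    have h2 : permLen (b₂⁻¹ * gammaNN n) = permLen ((gammaNN n)⁻¹ * b₂) := by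
      rw [← permLen_inv (b₂⁻¹ * gammaNN n), mul_inv_rev, inv_inv]
    omega
  rw [chainF]
  omega
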